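/- Let F(t) ∈ ℤ⟦t⟧ be the power series whose coefficient of t^n is the number of lists of n integers, each belonging to {−2, −1, 0, 1, 2}, all of whose prefix sums are ≥ 0 and whose total sum is 0 (nonnegative excursions). Then t⁴F⁴ − t²(t + 1)F³ + t(t + 2)F² − (t + 1)F + 1 = 0 in ℤ⟦t⟧. -/

import Mathlib

open PowerSeries

/-- The generating function for nonnegative excursions with step set
`{-2, -1, 0, 1, 2}`: the coefficient of `t^n` is the number of lists of `n`
integers from that set, all of whose prefix sums are `≥ 0`, with total sum `0`. -/
noncomputable def excursionGF : PowerSeries ℤ :=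
  PowerSeries.mk fun n =>
    (Nat.card {l : List ℤ //
      l.length = n ∧
      (∀ x ∈ l, x ∈ ({-2, -1, 0, 1, 2} : Set ℤ)) ∧
      (∀ i : ℕ, 0 ≤ (l.take i).sum) ∧
      l.sum = 0} : ℤ)



noncomputable section ExcAux

/-- The RHS operator for the fixed-point equation of the auxiliary series `h`. -/
def PhiP (v : PowerSeries ℤ) : PowerSeries ℤ :=
  C (3 : ℤ) * v + C (4 : ℤ) * (X * (v * v)) + C (2 : ℤ) * (X ^ 2 * (v * (v * v)))
    + X ^ 3 * ((v * v) * (v * v)) - v * v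

lemma coeff_agree_mul {a b a' b' : PowerSeries ℤ} {n : ℕ}
    (ha : ∀ i ≤ n, coeff i a = coeff i a')
    (hb : ∀ i ≤ n, coeff i b = coeff i b') :
    ∀ i ≤ n, coeff i (a * b) = coeff i (a' * b') := by
  intro i hi
  rw [coeff_mul, coeff_mul]
  refine Finset.sum_congr rfl ?_
  intro p hp
  replace hp : p.1 + p.2 = i := Finset.HasAntidiagonal.mem_antidiagonal.1 hp
  rw [ha p.1 (by omega), hb p.2 (by omega)]

lemma coeff_PhiP_congr {u v : ℕ → ℤ} {n : ℕ} (h : ∀ i ≤ n, u i = v i) :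
    coeff n (PhiP (mk u)) = coeff n (PhiP (mk v)) := by
  have h0 : ∀ i ≤ n, coeff i (mk u) = coeff i (mk v) := by
    intro i hi; rw [coeff_mk, coeff_mk]; exact h i hi
  have hr : ∀ (w : PowerSeries ℤ), ∀ i ≤ n, coeff i w = coeff i w :=
    fun w i _ => rfl
  have h2 := coeff_agree_mul h0 h0
  have h3 := coeff_agree_mul h0 h2
  have h4 := coeff_agree_mul h2 h2
  unfold PhiP
  simp only [map_add, map_sub]
  rw [coeff_agree_mul (hr (C (3 : ℤ))) h0 n le_rfl,
    coeff_agree_mul (hr (C (4 : ℤ))) (coeff_agree_mul (hr X) h2) n le_rfl,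
    coeff_agree_mul (hr (C (2 : ℤ))) (coeff_agree_mul (hr (X ^ 2)) h3) n le_rfl,
    coeff_agree_mul (hr (X ^ 3)) h4 n le_rfl, h2 n le_rfl]

/-- One step of the Picard iteration computing the coefficients of `h`. -/
def stepF (u : ℕ → ℤ) : ℕ → ℤ
  | 0 => 1
  | n + 1 => coeff n (PhiP (mk u))

lemma stepF_congr {u v : ℕ → ℤ} {n : ℕ} (h : ∀ i < n, u i = v i) :
    stepF u n = stepF v n := by
  cases n with
  | zero => rfl
  | succ n => exact coeff_PhiP_congr (fun i hi => h i (by omega))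

def iterF : ℕ → (ℕ → ℤ) := fun N => stepF^[N] (fun _ => 0)

lemma iterF_stab : ∀ n N M, n < N → n < M → iterF N n = iterF M n := by
  intro n
  induction n using Nat.strong_induction_on with
  | _ n ih =>
    intro N M hN hM
    obtain ⟨N', rfl⟩ : ∃ N', N = N' + 1 := ⟨N - 1, by omega⟩
    obtain ⟨M', rfl⟩ : ∃ M', M = M' + 1 := ⟨M - 1, by omega⟩
    show (stepF^[N' + 1] _) n = (stepF^[M' + 1] _) n
    rw [Function.iterate_succ_apply', Function.iterate_succ_apply']
    exact stepF_congr (fun i hi => ih i hi N' M' (by omega) (by omega))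

/-- coefficients of `h` -/
def hcf : ℕ → ℤ := fun n => iterF (n + 1) n

lemma iterF_eq_hcf {i N : ℕ} (h : i < N) : iterF N i = hcf i :=
  iterF_stab i N (i + 1) h (Nat.lt_succ_self i)

/-- The auxiliary power series `h`, satisfying `h = 1 + X * PhiP h`. -/
def hh : PowerSeries ℤ := mk hcf

lemma hHeq : hh = 1 + X * PhiP hh := by
  ext n
  cases n with
  | zero =>
    have : coeff 0 hh = 1 := by
      rw [hh, coeff_mk]; rfl
    rw [this]
    simp
  | succ n =>
    have l1 : coeff (n + 1) hh = stepF (iterF (n + 1)) (n + 1) := by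
      rw [hh, coeff_mk]
      show iterF (n + 2) (n + 1) = _
      show (stepF^[n + 2] _) (n + 1) = _
      rw [Function.iterate_succ_apply']
      rfl
    rw [l1]
    have l2 : stepF (iterF (n + 1)) (n + 1) = coeff n (PhiP hh) := by
      show coeff n (PhiP (mk (iterF (n + 1)))) = coeff n (PhiP (mk hcf))
      exact coeff_PhiP_congr (fun i hi => iterF_eq_hcf (by omega))
    rw [l2, map_add, coeff_succ_X_mul]
    simp [coeff_one]

lemma hH : hh = 1 + 3 * X * hh + 4 * X ^ 2 * hh ^ 2 + 2 * X ^ 3 * hh ^ 3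
    + X ^ 4 * hh ^ 4 - X * hh ^ 2 := by
  conv_lhs => rw [hHeq]
  unfold PhiP
  simp only [map_ofNat]
  ring

end ExcAux


noncomputable section ExcAux2

/-- Inverse of `1 + X * h`. -/
def Jh : PowerSeries ℤ := invOfUnit (1 + X * hh) 1

lemma hJ : (1 + X * hh) * Jh = 1 := by
  apply mul_invOfUnit
  simp

/-- The algebraic copy of the excursion generating function. -/
def Fs : PowerSeries ℤ := hh * Jh

/-- The first-passage series `g`. -/
def gs : PowerSeries ℤ := X * hh

lemma ne_zero_of_const {f : PowerSeries ℤ} (h : constantCoeff f ≠ 0) : f ≠ 0 := by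
  intro hf; rw [hf] at h; simp at h

lemma one_add_X_hh_ne : (1 + X * hh : PowerSeries ℤ) ≠ 0 := by
  apply ne_zero_of_const; simp

lemma one_add_X_Fs_ne : (1 + X * Fs : PowerSeries ℤ) ≠ 0 := by
  apply ne_zero_of_const; simp [Fs]

lemma hI : Fs = 1 + X * Fs * (1 + gs + gs ^ 2 + X * Fs) := by
  apply mul_right_cancel₀ (pow_ne_zero 2 one_add_X_hh_ne)
  show Fs * (1 + X * hh) ^ 2 = _
  rw [Fs, gs]
  linear_combination (hh - X * hh + X * hh ^ 2 - 3 * X ^ 2 * hh ^ 2 - X ^ 2 * hh ^ 2 * Jh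
    - 2 * X ^ 3 * hh ^ 3 - X ^ 3 * hh ^ 3 * Jh - X ^ 4 * hh ^ 4) * hJ + hH

lemma hII : gs = X * (1 + gs + gs ^ 2 + X * Fs + gs ^ 3 + 2 * (X * Fs) * gs) := by
  apply mul_right_cancel₀ one_add_X_hh_ne
  rw [Fs, gs]
  linear_combination (-(X ^ 2 * hh) - 2 * X ^ 3 * hh ^ 2) * hJ + X * hH

/-- the series counting nonnegative walks ending at height `k`, divided by `Fs`. -/
def q : ℕ → PowerSeries ℤ
  | 0 => 1
  | 1 => gs
  | (k + 2) => gs * q (k + 1) + (X * Fs) * q k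

lemma q_zero : q 0 = 1 := rfl

lemma q_one : q 1 = gs := rfl

lemma q_rec (k : ℕ) : q (k + 2) = gs * q (k + 1) + (X * Fs) * q k := rfl

lemma hq0 : q 0 * Fs = 1 + X * ((q 0 + q 1 + q 2) * Fs) := by
  rw [(q_rec 0 : q 2 = _)]
  show (1 : PowerSeries ℤ) * Fs = 1 + X * ((1 + gs + (gs * gs + (X * Fs) * 1)) * Fs)
  linear_combination hI

lemma hq1 : q 1 * Fs = X * ((q 0 + q 1 + q 2 + q 3) * Fs) := by
  rw [(q_rec 1 : q 3 = _), (q_rec 0 : q 2 = _)]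
  show gs * Fs = X * ((1 + gs + (gs * gs + (X * Fs) * 1)
    + (gs * (gs * gs + (X * Fs) * 1) + (X * Fs) * gs)) * Fs)
  linear_combination Fs * hII

lemma hq2 : q 2 = X * (q 0 + q 1 + q 2 + q 3 + q 4) := by
  rw [(q_rec 2 : q 4 = _), (q_rec 1 : q 3 = _), (q_rec 0 : q 2 = _), q_one, q_zero]
  linear_combination X * hI + gs * hII

lemma hq3 : q 3 = X * (q 1 + q 2 + q 3 + q 4 + q 5) := by
  rw [(q_rec 3 : q 5 = _), (q_rec 2 : q 4 = _), (q_rec 1 : q 3 = _), (q_rec 0 : q 2 = _), q_one, q_zero]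
  linear_combination (X * gs) * hI + (gs ^ 2 + X * Fs) * hII

lemma hqE : ∀ k, q (k + 2) = X * (q k + q (k + 1) + q (k + 2) + q (k + 3) + q (k + 4)) := by
  intro k
  induction k using Nat.strong_induction_on with
  | _ k ih =>
    match k with
    | 0 => exact hq2
    | 1 => exact hq3
    | (k + 2) =>
      have e0 := ih k (by omega)
      have e1 := ih (k + 1) (by omega)
      have r2 := (q_rec k : q (k + 2) = _)
      have r3 := (q_rec (k + 1) : q (k + 3) = _)
      have r4 := (q_rec (k + 2) : q (k + 4) = _)
      have r5 := (q_rec (k + 3) : q (k + 5) = _)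
      have r6 := (q_rec (k + 4) : q (k + 6) = _)
      show q (k + 4) = X * (q (k + 2) + q (k + 3) + q (k + 4) + q (k + 5) + q (k + 6))
      linear_combination (X * Fs) * e0 + gs * e1 - X * r2 - X * r3 + (1 - X) * r4
        - X * r5 - X * r6

lemma quartic_Fs : X ^ 4 * Fs ^ 4 - X ^ 2 * (X + 1) * Fs ^ 3
    + X * (X + 2) * Fs ^ 2 - (X + 1) * Fs + 1 = 0 := by
  have key : (X * (1 + X * Fs)) * (X ^ 4 * Fs ^ 4 - X ^ 2 * (X + 1) * Fs ^ 3
      + X * (X + 2) * Fs ^ 2 - (X + 1) * Fs + 1) = 0 := by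
    linear_combination (-(X * (1 + X * Fs) * (1 - X * Fs) ^ 2)
        - X * gs * (-(X * Fs) * ((1 - X * Fs) * gs + 1))) * hI
      + (X * Fs * (-(X * Fs) * ((1 - X * Fs) * gs + 1))) * hII
  rcases mul_eq_zero.1 key with h | h
  · exact absurd h (mul_ne_zero X_ne_zero one_add_X_Fs_ne)
  · exact h

end ExcAux2

section ExcComb

/-- Nonnegative walks of length `n` with steps in `{-2,…,2}` and total sum `k`. -/
def Exc (n : ℕ) (k : ℤ) : Type :=
  {l : List ℤ //
    l.length = n ∧
    (∀ x ∈ l, x ∈ ({-2, -1, 0, 1, 2} : Set ℤ)) ∧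
    (∀ i : ℕ, 0 ≤ (l.take i).sum) ∧
    l.sum = k}

/-- Walk counts, defined by the transfer recursion. -/
def cw : ℕ → ℤ → ℤ
  | 0, k => if k = 0 then 1 else 0
  | n + 1, k => if k < 0 then 0 else
      cw n (k + 2) + cw n (k + 1) + cw n k + cw n (k - 1) + cw n (k - 2)

lemma cw_neg : ∀ n (k : ℤ), k < 0 → cw n k = 0 := by
  intro n k hk
  cases n with
  | zero => simp only [cw]; rw [if_neg (by omega)]
  | succ n => simp only [cw]; rw [if_pos hk]

lemma cw_succ (n : ℕ) (k : ℤ) (hk : 0 ≤ k) :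
    cw (n + 1) k = cw n (k + 2) + cw n (k + 1) + cw n k + cw n (k - 1) + cw n (k - 2) := by
  simp only [cw]; rw [if_neg (not_lt.2 hk)]

def stepv : Fin 5 → ℤ := ![-2, -1, 0, 1, 2]

def idx : ℤ → Fin 5 := fun s =>
  if s = -2 then 0 else if s = -1 then 1 else if s = 0 then 2 else if s = 1 then 3 else 4

lemma stepv_mem (i : Fin 5) : stepv i ∈ ({-2, -1, 0, 1, 2} : Set ℤ) := by
  fin_cases i <;> simp [stepv]

lemma stepv_idx {s : ℤ} (h : s ∈ ({-2, -1, 0, 1, 2} : Set ℤ)) : stepv (idx s) = s := by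
  simp only [Set.mem_insert_iff, Set.mem_singleton_iff] at h
  rcases h with rfl | rfl | rfl | rfl | rfl <;> norm_num [idx, stepv] <;> decide

lemma stepv_inj : Function.Injective stepv := by
  intro i j hij
  fin_cases i <;> fin_cases j <;> first | rfl | (exfalso; simp [stepv] at hij)

instance excFinite (n : ℕ) (k : ℤ) : Finite (Exc n k) := by
  haveI : Finite ↥({-2, -1, 0, 1, 2} : Set ℤ) := (Set.toFinite _).to_subtype
  let f : Exc n k → (Fin n → ↥({-2, -1, 0, 1, 2} : Set ℤ)) := fun x i =>
    ⟨x.1.get ⟨i.1, by rw [x.2.1]; exact i.2⟩, x.2.2.1 _ (List.get_mem _ _)⟩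
  apply Finite.of_injective f
  rintro ⟨l1, p1⟩ ⟨l2, p2⟩ hxy
  apply Subtype.ext
  apply List.ext_get (by rw [p1.1, p2.1])
  intro m h1 h2
  have := congrFun hxy ⟨m, by rw [← p1.1]; exact h1⟩
  simpa [f] using this

lemma exc_empty_of_neg (n : ℕ) (k : ℤ) (hk : k < 0) : IsEmpty (Exc n k) := by
  constructor
  rintro ⟨l, hlen, _, hpre, hsum⟩
  have := hpre l.length
  rw [List.take_of_length_le le_rfl, hsum] at this
  omega

lemma card_exc_zero (k : ℤ) : (Nat.card (Exc 0 k) : ℤ) = cw 0 k := by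
  by_cases hk : k = 0
  · subst hk
    haveI : Unique (Exc 0 0) := by
      constructor
      case toInhabited => exact ⟨⟨[], by simp⟩⟩
      intro a
      apply Subtype.ext
      exact List.length_eq_zero_iff.1 a.2.1
    rw [Nat.card_unique]
    simp [cw]
  · haveI : IsEmpty (Exc 0 k) := by
      constructor
      rintro ⟨l, hlen, _, _, hsum⟩
      rw [List.length_eq_zero_iff.1 hlen] at hsum
      exact hk (by simpa using hsum.symm)
    rw [Nat.card_of_isEmpty]
    simp [cw, hk]

lemma exc_append {n : ℕ} {k : ℤ} (hk : 0 ≤ k) (i : Fin 5) (l : List ℤ)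
    (hlen : l.length = n)
    (hmem : ∀ x ∈ l, x ∈ ({-2, -1, 0, 1, 2} : Set ℤ))
    (hpre : ∀ j : ℕ, 0 ≤ (l.take j).sum)
    (hsum : l.sum = k - stepv i) :
    (l ++ [stepv i]).length = n + 1 ∧
    (∀ x ∈ l ++ [stepv i], x ∈ ({-2, -1, 0, 1, 2} : Set ℤ)) ∧
    (∀ j : ℕ, 0 ≤ ((l ++ [stepv i]).take j).sum) ∧
    (l ++ [stepv i]).sum = k := by
  have hsumfull : (l ++ [stepv i]).sum = k := by
    rw [List.sum_append, hsum]
    simp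
  refine ⟨by simp [hlen], ?_, ?_, hsumfull⟩
  · intro y hy
    rcases List.mem_append.1 hy with h | h
    · exact hmem y h
    · rw [List.mem_singleton.1 h]; exact stepv_mem i
  · intro j
    by_cases hj : j ≤ l.length
    · rw [List.take_append_of_le_length hj]; exact hpre j
    · rw [List.take_of_length_le (by simp; omega), hsumfull]
      exact hk

/-- The peeling bijection. -/
noncomputable def excEquiv (n : ℕ) (k : ℤ) (hk : 0 ≤ k) :
    (Σ i : Fin 5, Exc n (k - stepv i)) ≃ Exc (n + 1) k := by
  apply Equiv.ofBijective
    (f := fun x => (⟨x.2.1 ++ [stepv x.1],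
      exc_append hk x.1 x.2.1 x.2.2.1 x.2.2.2.1 x.2.2.2.2.1 x.2.2.2.2.2⟩ : Exc (n + 1) k))
  constructor
  · rintro ⟨i, l1, h1⟩ ⟨j, l2, h2⟩ hf
    simp only [Subtype.mk.injEq] at hf
    obtain ⟨hl, hs⟩ := List.append_inj' hf rfl
    have hij : i = j := stepv_inj (by simpa using hs)
    subst hij
    exact congrArg (Sigma.mk i) (Subtype.ext hl)
  · rintro ⟨l, hlen, hmem, hpre, hsum⟩
    have hne : l ≠ [] := by
      intro h; rw [h] at hlen; simp at hlen
    set s := l.getLast hne with hs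
    have hsmem : s ∈ ({-2, -1, 0, 1, 2} : Set ℤ) := hmem s (List.getLast_mem hne)
    have hrec : l.dropLast ++ [s] = l := List.dropLast_append_getLast hne
    have hsum' : l.dropLast.sum = k - s := by
      have h2 : (l.dropLast ++ [s]).sum = k := by rw [hrec]; exact hsum
      rw [List.sum_append] at h2
      simp at h2
      omega
    refine ⟨⟨idx s, ⟨l.dropLast, ?_, ?_, ?_, ?_⟩⟩, ?_⟩
    · rw [List.length_dropLast, hlen]; omega
    · intro y hy
      exact hmem y ((List.dropLast_sublist l).mem hy)
    · intro j
      rw [List.dropLast_eq_take, List.take_take]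
      exact hpre _
    · rw [stepv_idx hsmem]; exact hsum'
    · apply Subtype.ext
      show l.dropLast ++ [stepv (idx s)] = l
      rw [stepv_idx hsmem]
      exact hrec

lemma card_exc_succ (n : ℕ) (k : ℤ) (hk : 0 ≤ k) :
    (Nat.card (Exc (n + 1) k) : ℤ) =
      (Nat.card (Exc n (k + 2)) : ℤ) + Nat.card (Exc n (k + 1)) + Nat.card (Exc n k)
        + Nat.card (Exc n (k - 1)) + Nat.card (Exc n (k - 2)) := by
  rw [← Nat.card_congr (excEquiv n k hk)]
  haveI : ∀ i : Fin 5, Fintype (Exc n (k - stepv i)) := fun i => Fintype.ofFinite _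
  rw [Nat.card_eq_fintype_card, Fintype.card_sigma, Fin.sum_univ_five]
  have e : ∀ i : Fin 5, Fintype.card (Exc n (k - stepv i)) = Nat.card (Exc n (k - stepv i)) :=
    fun i => (Nat.card_eq_fintype_card).symm
  rw [e 0, e 1, e 2, e 3, e 4]
  have v0 : k - stepv 0 = k + 2 := by norm_num [stepv]
  have v1 : k - stepv 1 = k + 1 := by norm_num [stepv]
  have v2 : k - stepv 2 = k := by norm_num [stepv]; decide
  have v3 : k - stepv 3 = k - 1 := by norm_num [stepv]; decide
  have v4 : k - stepv 4 = k - 2 := by norm_num [stepv]; decide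
  rw [v0, v1, v2, v3, v4]
  push_cast
  ring

lemma card_exc (n : ℕ) (k : ℤ) : (Nat.card (Exc n k) : ℤ) = cw n k := by
  induction n generalizing k with
  | zero => exact card_exc_zero k
  | succ n ih =>
    rcases lt_or_ge k 0 with hk | hk
    · haveI := exc_empty_of_neg (n + 1) k hk
      rw [Nat.card_of_isEmpty, cw_neg _ _ hk]
      simp
    · rw [card_exc_succ n k hk, ih, ih, ih, ih, ih, cw_succ n k hk]

end ExcComb

section ExcMain

lemma const_hh : constantCoeff hh = 1 := by
  have : constantCoeff hh = coeff 0 hh := by simp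
  rw [this, hh, coeff_mk]
  rfl

lemma const_Fs : constantCoeff Fs = 1 := by
  rw [Fs, map_mul, const_hh, Jh, constantCoeff_invOfUnit]
  simp

lemma const_gs : constantCoeff gs = 0 := by
  rw [gs, map_mul, constantCoeff_X, zero_mul]

lemma const_q : ∀ k : ℕ, constantCoeff (q k) = if k = 0 then 1 else 0 := by
  intro k
  match k with
  | 0 => simp [q_zero]
  | 1 => simp [q_one, const_gs]
  | (k + 2) =>
    rw [q_rec, map_add, map_mul, map_mul, const_gs, map_mul, constantCoeff_X]
    simp

lemma coeff_excursion : ∀ n (k : ℕ), coeff n (q k * Fs) = cw n (k : ℤ) := by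
  intro n
  induction n with
  | zero =>
    intro k
    rw [coeff_zero_eq_constantCoeff, map_mul, const_q, const_Fs, mul_one]
    simp only [cw, Nat.cast_eq_zero]
  | succ n ih =>
    intro k
    match k with
    | 0 =>
      rw [hq0, map_add, coeff_succ_X_mul, add_mul, add_mul, map_add, map_add,
        ih 0, ih 1, ih 2]
      have R : cw (n + 1) ((0 : ℕ) : ℤ) = cw n 2 + cw n 1 + cw n 0 := by
        rw [Nat.cast_zero, cw_succ n 0 le_rfl,
          cw_neg n (0 - 1) (by norm_num), cw_neg n (0 - 2) (by norm_num)]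
        norm_num
      rw [R]
      push_cast
      simp [coeff_one]
      ring
    | 1 =>
      rw [hq1, coeff_succ_X_mul, add_mul, add_mul, add_mul, map_add, map_add, map_add,
        ih 0, ih 1, ih 2, ih 3]
      have R : cw (n + 1) ((1 : ℕ) : ℤ) = cw n 3 + cw n 2 + cw n 1 + cw n 0 := by
        rw [Nat.cast_one, cw_succ n 1 (by norm_num), cw_neg n (1 - 2) (by norm_num)]
        norm_num
      rw [R]
      push_cast
      ring
    | (k + 2) =>
      have E : q (k + 2) * Fs
          = X * ((q k + q (k + 1) + q (k + 2) + q (k + 3) + q (k + 4)) * Fs) := by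
        conv_lhs => rw [hqE k, mul_assoc]
      rw [E, coeff_succ_X_mul, add_mul, add_mul, add_mul, add_mul,
        map_add, map_add, map_add, map_add,
        ih k, ih (k + 1), ih (k + 2), ih (k + 3), ih (k + 4)]
      have hge : (0 : ℤ) ≤ ((k : ℤ) + 2) := by positivity
      have R : cw (n + 1) (((k + 2 : ℕ)) : ℤ)
          = cw n ((k : ℤ) + 4) + cw n ((k : ℤ) + 3) + cw n ((k : ℤ) + 2)
            + cw n ((k : ℤ) + 1) + cw n (k : ℤ) := by
        push_cast
        rw [cw_succ n ((k : ℤ) + 2) hge]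
        norm_num
        ring_nf
      rw [R]
      push_cast
      ring
end ExcMain

lemma excursionGF_eq_Fs : excursionGF = Fs := by
  ext n
  have h1 : coeff n excursionGF = ((Nat.card (Exc n 0) : ℤ)) := by
    rw [excursionGF, coeff_mk]
    rfl
  have h2 := coeff_excursion n 0
  rw [q_zero, one_mul, Nat.cast_zero] at h2
  rw [h1, card_exc n 0, ← h2]

theorem excursion_minimalPolynomial :
    X ^ 4 * excursionGF ^ 4 - X ^ 2 * (X + 1) * excursionGF ^ 3
      + X * (X + 2) * excursionGF ^ 2 - (X + 1) * excursionGF + 1 = 0 := by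
  rw [excursionGF_eq_Fs]
  exact quartic_Fs
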